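/- Let ν be an (n,m)-permutation (an ordered selection of m distinct elements of {1,…,n}) and let μ be the generalized permuton corresponding to ν. Then for any permutation τ ∈ S_k with k ≤ m, |t(τ, ν) − t(τ, μ)| ≤ (1/m)·C(k,2), where t(τ, ν) is the combinatorial pattern density of τ in ν and t(τ, μ) the probabilistic pattern density in μ. -/

import Mathlib

open MeasureTheory Set Filter
open scoped ENNReal

/-- Joint distribution function of a measure on the plane. -/
noncomputable def jointCDF (μ : Measure (ℝ × ℝ)) (x y : ℝ) : ℝ :=
  (μ {p | p.1 ≤ x ∧ p.2 ≤ y}).toReal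

/-- First (x-) marginal distribution function. -/
noncomputable def margX (μ : Measure (ℝ × ℝ)) (x : ℝ) : ℝ := (μ {p | p.1 ≤ x}).toReal

/-- Second (y-) marginal distribution function. -/
noncomputable def margY (μ : Measure (ℝ × ℝ)) (y : ℝ) : ℝ := (μ {p | p.2 ≤ y}).toReal

/-- A `lam`-permuton: probability measure on `[0,lam] × [0,1]` with uniform first
marginal on `[0,lam]` and second marginal Lipschitz with constant `1/lam`. -/
structure IsGenPermuton (lam : ℝ) (μ : Measure (ℝ × ℝ)) : Prop where
  lam_pos : 0 < lam
  lam_le : lam ≤ 1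
  prob : IsProbabilityMeasure μ
  supp : μ ((Set.Icc 0 lam ×ˢ Set.Icc (0:ℝ) 1)ᶜ) = 0
  unif_margX : ∀ x ∈ Set.Icc (0:ℝ) lam, margX μ x = x / lam
  lip_margY : ∀ a b : ℝ, 0 ≤ a → a ≤ b → b ≤ 1 → margY μ b - margY μ a ≤ (b - a) / lam

/-- The set of `k`-tuples of points in the plane realizing the pattern of `τ`:
there is an ordering `ρ` of the points which is strictly increasing in the first
coordinate, and the point with `i`-th smallest first coordinate has the `τ i`-th
smallest second coordinate. -/
def patternSet {k : ℕ} (τ : Equiv.Perm (Fin k)) : Set (Fin k → ℝ × ℝ) :=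
  {p | ∃ ρ : Equiv.Perm (Fin k), StrictMono (fun i => (p (ρ i)).1) ∧
    StrictMono (fun j => (p (ρ (τ⁻¹ j))).2)}

/-- `t(τ, μ)`: the probability that a `k`-point i.i.d. sample from `μ`
realizes the pattern `τ`. -/
noncomputable def patternDensity {k : ℕ} (τ : Equiv.Perm (Fin k)) (μ : Measure (ℝ × ℝ)) : ℝ :=
  ((Measure.pi fun _ : Fin k => μ) (patternSet τ)).toReal

/-- `d_∞`: sup distance of the joint distribution functions over the unit square. -/
noncomputable def dInf (μ₁ μ₂ : Measure (ℝ × ℝ)) : ℝ :=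
  sSup {d | ∃ x ∈ Set.Icc (0:ℝ) 1, ∃ y ∈ Set.Icc (0:ℝ) 1,
    d = |jointCDF μ₁ x y - jointCDF μ₂ x y|}

/-- `d_□`: rectangular distance over rectangles contained in the unit square. -/
noncomputable def dRect (μ₁ μ₂ : Measure (ℝ × ℝ)) : ℝ :=
  sSup {d | ∃ x₁ x₂ y₁ y₂ : ℝ, 0 ≤ x₁ ∧ x₁ ≤ x₂ ∧ x₂ ≤ 1 ∧ 0 ≤ y₁ ∧ y₁ ≤ y₂ ∧ y₂ ≤ 1 ∧
    d = |(μ₁ (Set.Icc x₁ x₂ ×ˢ Set.Icc y₁ y₂)).toReal -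
         (μ₂ (Set.Icc x₁ x₂ ×ˢ Set.Icc y₁ y₂)).toReal|}

/-- The generalized permuton associated to an ordered selection `ν : Fin m → Fin n`
(0-indexed): density `n²/m` on each square `[h/n,(h+1)/n) × [ν(h)/n,(ν(h)+1)/n)`. -/
noncomputable def selPermuton (n m : ℕ) (ν : Fin m → Fin n) : Measure (ℝ × ℝ) :=
  volume.withDensity (fun p =>
    if ∃ h : Fin m, (h : ℝ)/n ≤ p.1 ∧ p.1 < ((h : ℝ)+1)/n ∧
        (ν h : ℝ)/n ≤ p.2 ∧ p.2 < ((ν h : ℝ)+1)/n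
    then ENNReal.ofReal ((n:ℝ)^2 / m) else 0)

/-- Combinatorial pattern density `t(τ, ν) = Γ(τ,ν) / C(m,k)`. -/
noncomputable def combDensity {n m k : ℕ} (τ : Equiv.Perm (Fin k)) (ν : Fin m → Fin n) : ℝ :=
  (Nat.card {x : Fin k → Fin m // StrictMono x ∧ ∀ i j, ν (x i) < ν (x j) ↔ τ i < τ j} : ℝ)
    / (m.choose k)

/-- Weak convergence of a sequence of measures on the plane. -/
def WeakConv (μs : ℕ → Measure (ℝ × ℝ)) (μ : Measure (ℝ × ℝ)) : Prop :=
  ∀ f : BoundedContinuousFunction (ℝ × ℝ) ℝ,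
    Filter.Tendsto (fun n => ∫ p, f p ∂(μs n)) Filter.atTop (nhds (∫ p, f p ∂μ))

/-- The `q`-quantile of a 1-dim continuous distribution function `F`. -/
noncomputable def quantile (F : ℝ → ℝ) (q : ℝ) : ℝ := sSup {x | F x = q}

/-- The x-grid `0 = x₀ < x₁ < ⋯ < x_k = lam` of the `k`-subdivision of a
`lam`-permuton `μ`, where `x_i` is the `(i/k)`-quantile of the first marginal. -/
noncomputable def gridX (μ : Measure (ℝ × ℝ)) (lam : ℝ) (k : ℕ) (i : ℕ) : ℝ :=
  if i = 0 then 0 else if i = k then lam else quantile (margX μ) ((i : ℝ)/k)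

/-- The y-grid `0 = y₀ < y₁ < ⋯ < y_k = 1` of quantiles of the second marginal. -/
noncomputable def gridY (μ : Measure (ℝ × ℝ)) (k : ℕ) (j : ℕ) : ℝ :=
  if j = 0 then 0 else if j = k then 1 else quantile (margY μ) ((j : ℝ)/k)

/-- The measure `μ_σ` of Definition 3: mass `1/k` distributed uniformly on each
rectangle `R_{i, σ(i)}` of the `k`-quantile grid subdivision of `μ`. -/
noncomputable def subdivMeasure (μ : Measure (ℝ × ℝ)) (lam : ℝ) (k : ℕ)
    (σ : Equiv.Perm (Fin k)) : Measure (ℝ × ℝ) :=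
  ∑ i : Fin k, ((k : ℝ≥0∞))⁻¹ •
    ProbabilityTheory.uniformOn
      (Set.Ico (gridX μ lam k i) (gridX μ lam k (i+1)) ×ˢ
       Set.Ico (gridY μ k (σ i : ℕ)) (gridY μ k ((σ i : ℕ)+1)))


namespace Stmt11Aux

open scoped ENNReal Classical

variable {n m k : ℕ}

/-- The column square of index `h`. -/
def sq (n : ℕ) {m : ℕ} (ν : Fin m → Fin n) (h : Fin m) : Set (ℝ × ℝ) :=
  Set.Ico ((h:ℝ)/n) (((h:ℝ)+1)/n) ×ˢ Set.Ico ((ν h:ℝ)/n) (((ν h:ℝ)+1)/n)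

lemma measurableSet_sq (ν : Fin m → Fin n) (h : Fin m) : MeasurableSet (sq n ν h) :=
  measurableSet_Ico.prod measurableSet_Ico

lemma selPermuton_eq (n m : ℕ) (ν : Fin m → Fin n) :
    selPermuton n m ν
      = ENNReal.ofReal ((n:ℝ)^2 / m) • volume.restrict (⋃ h, sq n ν h) := by
  rw [selPermuton]
  have hfun : (fun p : ℝ×ℝ =>
      if ∃ h : Fin m, (h : ℝ)/n ≤ p.1 ∧ p.1 < ((h : ℝ)+1)/n ∧
        (ν h : ℝ)/n ≤ p.2 ∧ p.2 < ((ν h : ℝ)+1)/n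
      then ENNReal.ofReal ((n:ℝ)^2 / m) else 0)
      = (⋃ h, sq n ν h).indicator (fun _ => ENNReal.ofReal ((n:ℝ)^2 / m)) := by
    funext p
    rw [Set.indicator_apply]
    congr 1
    simp only [eq_iff_iff, Set.mem_iUnion, sq, Set.mem_prod, Set.mem_Ico]
    tauto
  rw [hfun, withDensity_indicator (MeasurableSet.iUnion fun h => measurableSet_sq ν h),
    withDensity_const]

lemma div_lt_div_nat (hn : 0 < n) {a b : ℕ} (hab : a < b) :
    ((a:ℝ)+1)/n ≤ (b:ℝ)/n := by
  have h1 : (a:ℝ)+1 ≤ b := by exact_mod_cast hab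
  have h2 : (0:ℝ) < n := by exact_mod_cast hn
  gcongr

lemma fst_lt (hn : 0 < n) (ν : Fin m → Fin n) {a b : Fin m} (hab : a < b)
    {p q : ℝ × ℝ} (hp : p ∈ sq n ν a) (hq : q ∈ sq n ν b) : p.1 < q.1 := by
  have h1 := hp.1.2
  have h2 := hq.1.1
  have := div_lt_div_nat hn (show (a:ℕ) < (b:ℕ) from hab)
  linarith

lemma snd_lt (hn : 0 < n) (ν : Fin m → Fin n) {a b : Fin m} (hab : ν a < ν b)
    {p q : ℝ × ℝ} (hp : p ∈ sq n ν a) (hq : q ∈ sq n ν b) : p.2 < q.2 := by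
  have h1 := hp.2.2
  have h2 := hq.2.1
  have := div_lt_div_nat hn (show (ν a : ℕ) < (ν b : ℕ) from hab)
  linarith

lemma sq_disjoint (hn : 0 < n) (ν : Fin m → Fin n) {a b : Fin m} (hab : a ≠ b) :
    Disjoint (sq n ν a) (sq n ν b) := by
  rw [Set.disjoint_left]
  intro p hpa hpb
  rcases lt_or_gt_of_ne hab with h | h
  · exact absurd (fst_lt hn ν h hpa hpb) (lt_irrefl _)
  · exact absurd (fst_lt hn ν h hpb hpa) (lt_irrefl _)

lemma volume_sq (hn : 0 < n) (ν : Fin m → Fin n) (h : Fin m) :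
    volume (sq n ν h) = ENNReal.ofReal (1/(n:ℝ)^2) := by
  have hne : (n:ℝ) ≠ 0 := Nat.cast_ne_zero.mpr hn.ne'
  have hd : ∀ a : ℝ, (a+1)/n - a/n = 1/n := by intro a; field_simp; ring
  rw [sq, show (volume : Measure (ℝ×ℝ)) = (volume : Measure ℝ).prod volume from rfl,
    Measure.prod_prod, Real.volume_Ico, Real.volume_Ico, hd, hd,
    ← ENNReal.ofReal_mul (by positivity)]
  congr 1
  field_simp

lemma selPermuton_sq (hm : 0 < m) (hn : 0 < n) (ν : Fin m → Fin n) (h : Fin m) :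
    selPermuton n m ν (sq n ν h) = ((m:ℝ≥0∞))⁻¹ := by
  have hne : (n:ℝ) ≠ 0 := Nat.cast_ne_zero.mpr hn.ne'
  have hme : (m:ℝ) ≠ 0 := Nat.cast_ne_zero.mpr hm.ne'
  rw [selPermuton_eq, Measure.smul_apply, smul_eq_mul,
    Measure.restrict_apply (measurableSet_sq ν h),
    Set.inter_eq_self_of_subset_left (Set.subset_iUnion (sq n ν) h),
    volume_sq hn ν h, ← ENNReal.ofReal_mul (by positivity)]
  have : (n:ℝ)^2 / m * (1/(n:ℝ)^2) = ((m:ℝ))⁻¹ := by field_simp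
  rw [this, ← ENNReal.ofReal_natCast m, ← ENNReal.ofReal_inv_of_pos (by positivity)]

lemma selPermuton_compl (ν : Fin m → Fin n) :
    selPermuton n m ν ((⋃ h, sq n ν h)ᶜ) = 0 := by
  rw [selPermuton_eq, Measure.smul_apply, smul_eq_mul,
    Measure.restrict_apply (MeasurableSet.iUnion fun h => measurableSet_sq ν h).compl,
    Set.compl_inter_self, measure_empty, mul_zero]

lemma selPermuton_prob (hm : 0 < m) (hn : 0 < n) (ν : Fin m → Fin n) :
    IsProbabilityMeasure (selPermuton n m ν) := by
  constructor
  have hU : MeasurableSet (⋃ h, sq n ν h) := MeasurableSet.iUnion fun h => measurableSet_sq ν h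
  rw [← measure_add_measure_compl hU, selPermuton_compl ν, add_zero,
    measure_iUnion (fun a b hab => sq_disjoint hn ν hab) (fun h => measurableSet_sq ν h)]
  simp only [selPermuton_sq hm hn ν]
  rw [tsum_fintype]
  simp only [Finset.sum_const, Finset.card_univ, Fintype.card_fin, nsmul_eq_mul]
  exact ENNReal.mul_inv_cancel (by exact_mod_cast hm.ne') (ENNReal.natCast_ne_top m)

section Pattern

variable (τ : Equiv.Perm (Fin k))

lemma measurableSet_patternSet : MeasurableSet (patternSet τ) := by
  rw [patternSet, Set.setOf_exists]
  apply MeasurableSet.iUnion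
  intro ρ
  rw [Set.setOf_and]
  have key : ∀ f g : Fin k → Fin k,
      MeasurableSet {p : Fin k → ℝ×ℝ | StrictMono fun i => (p (f i)).1} ∧
      MeasurableSet {p : Fin k → ℝ×ℝ | StrictMono fun i => (p (f i)).2} := by
    intro f g
    constructor <;> {
      have : ∀ (F : ℝ×ℝ → ℝ), Measurable F →
          MeasurableSet {p : Fin k → ℝ×ℝ | StrictMono fun i => F (p (f i))} := by
        intro F hF
        have heq : {p : Fin k → ℝ×ℝ | StrictMono fun i => F (p (f i))}
            = ⋂ (i : Fin k), ⋂ (j : Fin k), ⋂ (_ : i < j),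
              {p : Fin k → ℝ×ℝ | F (p (f i)) < F (p (f j))} := by
          ext p
          simp only [Set.mem_iInter, Set.mem_setOf_eq]
          exact ⟨fun h i j hij => h hij, fun h a b hab => h a b hab⟩
        rw [heq]
        refine MeasurableSet.iInter fun i => MeasurableSet.iInter fun j =>
          MeasurableSet.iInter fun _ => ?_
        exact measurableSet_lt (hF.comp (measurable_pi_apply (f i)))
          (hF.comp (measurable_pi_apply (f j)))
      first
        | exact this Prod.fst measurable_fst
        | exact this Prod.snd measurable_snd }
  exact ((key (fun i => ρ i) (fun i => ρ i)).1).inter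
    ((key (fun j => ρ (τ⁻¹ j)) (fun j => ρ (τ⁻¹ j))).2)

/-- The event that the `i`-th sample point lies in the column square of `c i`. -/
def Ev (n : ℕ) {m k : ℕ} (ν : Fin m → Fin n) (c : Fin k → Fin m) : Set (Fin k → ℝ × ℝ) :=
  Set.pi Set.univ fun i => sq n ν (c i)

/-- `c` realizes the pattern `τ`. -/
def Pat {k : ℕ} (τ : Equiv.Perm (Fin k)) (n : ℕ) {m : ℕ} (ν : Fin m → Fin n)
    (c : Fin k → Fin m) : Prop :=
  ∃ ρ : Equiv.Perm (Fin k), StrictMono (fun i => c (ρ i)) ∧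
    StrictMono (fun j => ν (c (ρ (τ⁻¹ j))))

lemma coord_iff (hn : 0 < n) {ν : Fin m → Fin n} (hν : Function.Injective ν)
    {c : Fin k → Fin m} (hc : Function.Injective c) {p : Fin k → ℝ × ℝ}
    (hp : p ∈ Ev n ν c) (i j : Fin k) :
    ((p i).1 < (p j).1 ↔ c i < c j) ∧ ((p i).2 < (p j).2 ↔ ν (c i) < ν (c j)) := by
  have hpi : p i ∈ sq n ν (c i) := hp i (Set.mem_univ i)
  have hpj : p j ∈ sq n ν (c j) := hp j (Set.mem_univ j)
  constructor
  · constructor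
    · intro hlt
      rcases lt_trichotomy (c i) (c j) with h | h | h
      · exact h
      · exact absurd (hc h ▸ hlt) (lt_irrefl _)
      · exact absurd (lt_trans hlt (fst_lt hn ν h hpj hpi)) (lt_irrefl _)
    · intro h; exact fst_lt hn ν h hpi hpj
  · constructor
    · intro hlt
      rcases lt_trichotomy (ν (c i)) (ν (c j)) with h | h | h
      · exact h
      · exact absurd ((hc (hν h)) ▸ hlt) (lt_irrefl _)
      · exact absurd (lt_trans hlt (snd_lt hn ν h hpj hpi)) (lt_irrefl _)
    · intro h; exact snd_lt hn ν h hpi hpj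

lemma pattern_inter_ev (hn : 0 < n) {ν : Fin m → Fin n} (hν : Function.Injective ν)
    {c : Fin k → Fin m} (hc : Function.Injective c) :
    patternSet τ ∩ Ev n ν c = if Pat τ n ν c then Ev n ν c else ∅ := by
  split_ifs with hP
  · refine Set.inter_eq_self_of_subset_right fun p hp => ?_
    obtain ⟨ρ, h1, h2⟩ := hP
    refine ⟨ρ, fun i j hij => ?_, fun i j hij => ?_⟩
    · exact ((coord_iff hn hν hc hp (ρ i) (ρ j)).1).2 (h1 hij)
    · exact ((coord_iff hn hν hc hp (ρ (τ⁻¹ i)) (ρ (τ⁻¹ j))).2).2 (h2 hij)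
  · ext p
    simp only [Set.mem_inter_iff, Set.mem_empty_iff_false, iff_false, not_and]
    intro hpat hp
    obtain ⟨ρ, h1, h2⟩ := hpat
    refine hP ⟨ρ, fun i j hij => ?_, fun i j hij => ?_⟩
    · exact ((coord_iff hn hν hc hp (ρ i) (ρ j)).1).1 (h1 hij)
    · exact ((coord_iff hn hν hc hp (ρ (τ⁻¹ i)) (ρ (τ⁻¹ j))).2).1 (h2 hij)

/-- The counting bijection: pairs (increasing occurrence, shuffle) ↔ injective
tuples realizing the pattern. -/
lemma card_pat (ν : Fin m → Fin n) :
    Nat.card {c : Fin k → Fin m // Function.Injective c ∧ Pat τ n ν c}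
      = Nat.card {x : Fin k → Fin m //
          StrictMono x ∧ ∀ i j, ν (x i) < ν (x j) ↔ τ i < τ j} * Nat.factorial k := by
  have wf : WellFoundedLT (Fin k) := inferInstance
  have key : ({x : Fin k → Fin m //
        StrictMono x ∧ ∀ i j, ν (x i) < ν (x j) ↔ τ i < τ j} × Equiv.Perm (Fin k))
      ≃ {c : Fin k → Fin m // Function.Injective c ∧ Pat τ n ν c} := by
    refine Equiv.ofBijective (fun xρ =>
      ⟨fun i => xρ.1.1 (xρ.2⁻¹ i), ?_, ?_⟩) ⟨?_, ?_⟩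
    · exact fun a b hab => (xρ.2)⁻¹.injective (xρ.1.2.1.injective hab)
    · refine ⟨xρ.2, ?_, ?_⟩
      · have he : (fun i => xρ.1.1 ((xρ.2)⁻¹ (xρ.2 i))) = xρ.1.1 := by
          funext i; simp
        rw [he]
        exact xρ.1.2.1
      · intro i j hij
        simp only [Equiv.Perm.inv_def, Equiv.symm_apply_apply]
        exact (xρ.1.2.2 (τ⁻¹ i) (τ⁻¹ j)).mpr (by simpa using hij)
    · rintro ⟨⟨x, hx, hxc⟩, ρ⟩ ⟨⟨x', hx', hxc'⟩, ρ'⟩ hEq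
      simp only [Subtype.mk_eq_mk] at hEq
      have hfun : (fun i => x (ρ⁻¹ i)) = fun i => x' (ρ'⁻¹ i) := hEq
      have hxx : x = x' := by
        apply Set.range_injOn_strictMono hx hx'
        calc Set.range x = Set.range (x ∘ ⇑ρ⁻¹) :=
              ((Equiv.surjective ρ⁻¹).range_comp x).symm
          _ = Set.range (x' ∘ ⇑ρ'⁻¹) := by
              rw [show x ∘ ⇑ρ⁻¹ = fun i => x (ρ⁻¹ i) from rfl, hfun]; rfl
          _ = Set.range x' := (Equiv.surjective ρ'⁻¹).range_comp x'
      subst hxx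
      have hinv : ρ⁻¹ = ρ'⁻¹ := by
        ext i
        exact congrArg Fin.val (hx.injective (congrFun hfun i))
      have hρ : ρ = ρ' := by rw [← inv_inv ρ, hinv, inv_inv]
      simp [hρ]
    · rintro ⟨c, hc, hP⟩
      obtain ⟨ρ, h1, h2⟩ := hP
      refine ⟨⟨⟨fun i => c (ρ i), h1, fun i j => ?_⟩, ρ⟩, ?_⟩
      · have : ∀ a b : Fin k, ν (c (ρ (τ⁻¹ a))) < ν (c (ρ (τ⁻¹ b))) ↔ a < b :=
          fun a b => h2.lt_iff_lt
        have hi := this (τ i) (τ j)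
        simpa using hi
      · ext i
        simp
  rw [← Nat.card_congr key, Nat.card_prod]
  simp only [Nat.card_eq_fintype_card, Fintype.card_perm, Fintype.card_fin]

end Pattern

lemma pow_sub_descFactorial (m k : ℕ) :
    m ^ k ≤ m.descFactorial k + k.choose 2 * m ^ (k - 1) := by
  induction k with
  | zero => simp
  | succ k ih =>
    rcases Nat.eq_zero_or_pos k with hk | hk
    · subst hk; simp
    have h1 : m ^ (k+1) ≤ m * m.descFactorial k + k.choose 2 * m ^ k := by
      calc m ^ (k+1) = m * m ^ k := by ring
        _ ≤ m * (m.descFactorial k + k.choose 2 * m ^ (k-1)) := Nat.mul_le_mul_left m ih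
        _ = m * m.descFactorial k + k.choose 2 * (m * m ^ (k-1)) := by ring
        _ = m * m.descFactorial k + k.choose 2 * m ^ k := by
            rw [← pow_succ']
            congr 3
            omega
    have h2 : m * m.descFactorial k ≤ m.descFactorial (k+1) + k * m ^ k := by
      have : m * m.descFactorial k ≤ (m - k) * m.descFactorial k + k * m.descFactorial k := by
        rcases le_or_gt k m with h | h
        · have : m - k + k = m := Nat.sub_add_cancel h
          nlinarith [Nat.descFactorial_le_pow m k]
        · nlinarith [Nat.descFactorial_le_pow m k, Nat.le_of_lt h]
      calc m * m.descFactorial k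
          ≤ (m - k) * m.descFactorial k + k * m.descFactorial k := this
        _ ≤ m.descFactorial (k+1) + k * m ^ k := by
            rw [Nat.descFactorial_succ]
            exact Nat.add_le_add le_rfl (Nat.mul_le_mul_left k (Nat.descFactorial_le_pow m k))
    have hch : (k+1).choose 2 = k.choose 2 + k := by
      rw [Nat.choose_succ_succ, Nat.choose_one_right, Nat.add_comm]
    calc m ^ (k+1) ≤ m * m.descFactorial k + k.choose 2 * m ^ k := h1
      _ ≤ m.descFactorial (k+1) + k * m ^ k + k.choose 2 * m ^ k := by
          exact Nat.add_le_add_right h2 _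
      _ = m.descFactorial (k+1) + (k+1).choose 2 * m ^ ((k+1) - 1) := by
          rw [hch, show (k+1) - 1 = k from rfl]; ring


lemma card_inj_fun (m k : ℕ) :
    Nat.card {c : Fin k → Fin m // Function.Injective c} = m.descFactorial k := by
  rw [Nat.card_eq_fintype_card,
    Fintype.card_congr (Equiv.subtypeInjectiveEquivEmbedding (Fin k) (Fin m)),
    Fintype.card_embedding_eq, Fintype.card_fin, Fintype.card_fin]

lemma pi_pattern_bounds (τ : Equiv.Perm (Fin k)) (hm : 0 < m) (hn : 0 < n)
    (ν : Fin m → Fin n) (hν : Function.Injective ν) :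
    (Nat.card {c : Fin k → Fin m // Function.Injective c ∧ Pat τ n ν c} : ℝ≥0∞)
        * ((m:ℝ≥0∞))⁻¹ ^ k
      ≤ Measure.pi (fun _ : Fin k => selPermuton n m ν) (patternSet τ) ∧
    Measure.pi (fun _ : Fin k => selPermuton n m ν) (patternSet τ)
      ≤ (Nat.card {c : Fin k → Fin m // Function.Injective c ∧ Pat τ n ν c} : ℝ≥0∞)
          * ((m:ℝ≥0∞))⁻¹ ^ k
        + ((m^k - m.descFactorial k : ℕ) : ℝ≥0∞) * ((m:ℝ≥0∞))⁻¹ ^ k := by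
  classical
  haveI hprob : IsProbabilityMeasure (selPermuton n m ν) := selPermuton_prob hm hn ν
  set μ := selPermuton n m ν with hμ
  set π := Measure.pi (fun _ : Fin k => μ) with hπ
  set S := patternSet τ with hS
  set U := ⋃ h, sq n ν h with hUdef
  set q : ℝ≥0∞ := ((m:ℝ≥0∞))⁻¹ ^ k with hq
  have hEv : ∀ c : Fin k → Fin m, π (Ev n ν c) = q := by
    intro c
    rw [hπ, Ev, Measure.pi_pi]
    simp only [hμ, selPermuton_sq hm hn ν]
    rw [Finset.prod_const, Finset.card_univ, Fintype.card_fin]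
  have hEvMeas : ∀ c : Fin k → Fin m, MeasurableSet (Ev n ν c) :=
    fun c => MeasurableSet.univ_pi fun i => measurableSet_sq ν (c i)
  have hEvDisj : ∀ c c' : Fin k → Fin m, c ≠ c' → Disjoint (Ev n ν c) (Ev n ν c') := by
    intro c c' hne
    obtain ⟨i, hi⟩ := Function.ne_iff.mp hne
    rw [Set.disjoint_left]
    intro p hp hp'
    exact Set.disjoint_left.mp (sq_disjoint hn ν hi)
      (hp i (Set.mem_univ i)) (hp' i (Set.mem_univ i))
  have hzero : ∀ i : Fin k, π {p : Fin k → ℝ×ℝ | p i ∉ U} = 0 := by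
    intro i
    have hset : {p : Fin k → ℝ×ℝ | p i ∉ U}
        = Set.pi Set.univ (fun j => if j = i then Uᶜ else Set.univ) := by
      ext p
      simp only [Set.mem_univ_pi, Set.mem_setOf_eq]
      constructor
      · intro h j
        split_ifs with hj
        · subst hj; exact h
        · trivial
      · intro h
        simpa using h i
    rw [hset, hπ, Measure.pi_pi]
    apply Finset.prod_eq_zero (Finset.mem_univ i)
    simp only [if_pos rfl, hμ, hUdef]
    exact selPermuton_compl ν
  have hTnull : π ((⋃ c : Fin k → Fin m, Ev n ν c)ᶜ) = 0 := by
    refine measure_mono_null ?_ (measure_iUnion_null hzero)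
    intro p hp
    simp only [Set.mem_compl_iff, Set.mem_iUnion, not_exists] at hp
    by_contra hcon
    simp only [Set.mem_iUnion, Set.mem_setOf_eq, not_exists, not_not] at hcon
    choose c hc using fun i => Set.mem_iUnion.mp (hcon i)
    exact hp c (fun i _ => hc i)
  have hcover : π S = ∑ c : Fin k → Fin m, π (S ∩ Ev n ν c) := by
    have h1 : π S = π (S ∩ ⋃ c, Ev n ν c) := by
      refine le_antisymm ?_ (measure_mono Set.inter_subset_left)
      calc π S ≤ π (S ∩ ⋃ c, Ev n ν c) + π (S \ ⋃ c, Ev n ν c) :=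
            measure_le_inter_add_diff _ _ _
        _ = π (S ∩ ⋃ c, Ev n ν c) := by
            rw [measure_mono_null (Set.diff_subset_compl S _) hTnull, add_zero]
    rw [h1, Set.inter_iUnion,
      measure_iUnion
        (fun a b hab => ((hEvDisj a b hab).mono Set.inter_subset_right Set.inter_subset_right))
        (fun c => (measurableSet_patternSet τ).inter (hEvMeas c)),
      tsum_fintype]
  have hval : ∀ c : Fin k → Fin m, Function.Injective c →
      π (S ∩ Ev n ν c) = if Pat τ n ν c then q else 0 := by
    intro c hc
    rw [hS, pattern_inter_ev τ hn hν hc]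
    split_ifs
    · exact hEv c
    · exact measure_empty
  set A := Finset.univ.filter
    (fun c : Fin k → Fin m => Function.Injective c ∧ Pat τ n ν c) with hA
  have hAcard : (A.card : ℝ≥0∞)
      = (Nat.card {c : Fin k → Fin m // Function.Injective c ∧ Pat τ n ν c} : ℝ≥0∞) := by
    rw [Nat.card_eq_fintype_card, Fintype.card_subtype]
  have hsumA : ∑ c ∈ A, π (S ∩ Ev n ν c) = (A.card : ℝ≥0∞) * q := by
    rw [Finset.sum_congr rfl (fun c hc => by
      obtain ⟨h1, h2⟩ := Finset.mem_filter.mp hc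
      rw [hval c h2.1, if_pos h2.2])]
    rw [Finset.sum_const, nsmul_eq_mul]
  constructor
  · rw [← hAcard, ← hsumA, hcover]
    exact Finset.sum_le_sum_of_subset (Finset.subset_univ A)
  · rw [hcover, ← Finset.sum_filter_add_sum_filter_not Finset.univ
      (fun c : Fin k → Fin m => Function.Injective c ∧ Pat τ n ν c), ← hA, hsumA, hAcard]
    gcongr
    have hinjcard : (Finset.univ.filter
        (fun c : Fin k → Fin m => Function.Injective c)).card = m.descFactorial k := by
      rw [← Fintype.card_subtype, ← Nat.card_eq_fintype_card, card_inj_fun]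
    have hccard : (Finset.univ.filter
        (fun c : Fin k → Fin m => ¬ Function.Injective c)).card
        = m^k - m.descFactorial k := by
      have := Finset.card_filter_add_card_filter_not
        (s := (Finset.univ : Finset (Fin k → Fin m)))
        (p := fun c => Function.Injective c)
      rw [Finset.card_univ, Fintype.card_fun, Fintype.card_fin, Fintype.card_fin] at this
      omega
    calc ∑ c ∈ Finset.univ.filter
          (fun c : Fin k → Fin m => ¬(Function.Injective c ∧ Pat τ n ν c)),
          π (S ∩ Ev n ν c)
        ≤ ∑ c ∈ Finset.univ.filter
            (fun c : Fin k → Fin m => ¬(Function.Injective c ∧ Pat τ n ν c)),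
            (if ¬ Function.Injective c then q else 0) := by
          refine Finset.sum_le_sum fun c hc => ?_
          have hnc := (Finset.mem_filter.mp hc).2
          by_cases hcInj : Function.Injective c
          · have : ¬ Pat τ n ν c := fun h => hnc ⟨hcInj, h⟩
            rw [hval c hcInj, if_neg this, if_neg (not_not.mpr hcInj)]
          · rw [if_pos hcInj]
            rw [← hEv c]
            exact measure_mono Set.inter_subset_right
      _ ≤ ∑ c : Fin k → Fin m, (if ¬ Function.Injective c then q else 0) :=
          Finset.sum_le_sum_of_subset (Finset.filter_subset _ _)
      _ = ((m^k - m.descFactorial k : ℕ) : ℝ≥0∞) * q := by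
          rw [← Finset.sum_filter, Finset.sum_const, nsmul_eq_mul, hccard]

end Stmt11Aux

/-- the combinatorial and probabilistic pattern densities of an
`(n,m)`-permutation differ by at most `C(k,2)/m`. -/
theorem stmt11 (n m k : ℕ) (hm : 0 < m) (hk : k ≤ m) (hmn : m ≤ n)
    (ν : Fin m → Fin n) (hν : Function.Injective ν) (τ : Equiv.Perm (Fin k)) :
    |combDensity τ ν - patternDensity τ (selPermuton n m ν)| ≤ (k.choose 2 : ℝ) / m := by
  classical
  have hn : 0 < n := lt_of_lt_of_le hm hmn
  obtain ⟨hlow, hup⟩ := Stmt11Aux.pi_pattern_bounds τ hm hn ν hν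
  set N := Nat.card {c : Fin k → Fin m // Function.Injective c ∧ Stmt11Aux.Pat τ n ν c} with hN
  set Γ := Nat.card {x : Fin k → Fin m //
      StrictMono x ∧ ∀ i j, ν (x i) < ν (x j) ↔ τ i < τ j} with hΓ
  have hNΓ : N = Γ * Nat.factorial k := Stmt11Aux.card_pat τ ν
  have hNd : N ≤ m.descFactorial k := by
    rw [hN, ← Stmt11Aux.card_inj_fun m k, Nat.card_eq_fintype_card, Nat.card_eq_fintype_card]
    exact Fintype.card_subtype_mono _ _ (fun c hc => hc.1)
  -- pass to reals
  set π := Measure.pi (fun _ : Fin k => selPermuton n m ν) with hπ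
  haveI : IsProbabilityMeasure (selPermuton n m ν) := Stmt11Aux.selPermuton_prob hm hn ν
  have hfin : π (patternSet τ) ≠ ⊤ := measure_ne_top π _
  have hqfin : (((m:ℝ≥0∞))⁻¹ ^ k) ≠ ⊤ := by
    apply ENNReal.pow_ne_top
    simp [ENNReal.inv_ne_top]
    exact_mod_cast hm.ne'
  have hNfin : (N : ℝ≥0∞) * ((m:ℝ≥0∞))⁻¹ ^ k ≠ ⊤ :=
    ENNReal.mul_ne_top (ENNReal.natCast_ne_top N) hqfin
  have hBfin : ((m^k - m.descFactorial k : ℕ) : ℝ≥0∞) * ((m:ℝ≥0∞))⁻¹ ^ k ≠ ⊤ :=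
    ENNReal.mul_ne_top (ENNReal.natCast_ne_top _) hqfin
  have hqtoReal : (((m:ℝ≥0∞))⁻¹ ^ k).toReal = ((m:ℝ)^k)⁻¹ := by
    rw [ENNReal.toReal_pow, ENNReal.toReal_inv, ENNReal.toReal_natCast, inv_pow]
  set t := patternDensity τ (selPermuton n m ν) with ht
  have httoReal : t = (π (patternSet τ)).toReal := rfl
  set M : ℝ := (m:ℝ)^k with hM
  have hMpos : 0 < M := by positivity
  have hmpos : (0:ℝ) < m := by exact_mod_cast hm
  have hlowR : (N : ℝ) / M ≤ t := by
    rw [httoReal, div_eq_mul_inv, ← hqtoReal]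
    rw [← ENNReal.toReal_natCast N, ← ENNReal.toReal_mul]
    exact ENNReal.toReal_mono hfin hlow
  have hupR : t ≤ (N : ℝ) / M + ((m^k - m.descFactorial k : ℕ) : ℝ) / M := by
    rw [httoReal, div_eq_mul_inv, div_eq_mul_inv, ← hqtoReal,
      ← ENNReal.toReal_natCast N, ← ENNReal.toReal_natCast (m^k - m.descFactorial k),
      ← ENNReal.toReal_mul, ← ENNReal.toReal_mul, ← ENNReal.toReal_add hNfin hBfin]
    exact ENNReal.toReal_mono (by finiteness) hup
  set g : ℝ := (N : ℝ) with hg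
  set d : ℝ := (m.descFactorial k : ℝ) with hd
  set B : ℝ := ((m^k - m.descFactorial k : ℕ) : ℝ) with hB
  -- arithmetic facts
  have hdfac : m.descFactorial k = Nat.factorial k * m.choose k :=
    Nat.descFactorial_eq_factorial_mul_choose m k
  have hCpos : 0 < (m.choose k : ℝ) := by exact_mod_cast Nat.choose_pos hk
  have hdpos : (0:ℝ) < d := by
    rw [hd, hdfac]
    have : 0 < Nat.factorial k * m.choose k := Nat.mul_pos k.factorial_pos (Nat.choose_pos hk)
    exact_mod_cast this
  have hdM : d ≤ M := by
    rw [hd, hM]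
    calc (m.descFactorial k : ℝ) ≤ ((m^k : ℕ) : ℝ) := by
          exact_mod_cast Nat.descFactorial_le_pow m k
      _ = (m:ℝ)^k := by push_cast; ring
  have hgd : g ≤ d := by rw [hg, hd]; exact_mod_cast hNd
  have hgnn : 0 ≤ g := by rw [hg]; positivity
  have hBMd : B = M - d := by
    rw [hB, hM, hd, Nat.cast_sub (Nat.descFactorial_le_pow m k)]
    push_cast
    ring
  have hcomb : combDensity τ ν = g / d := by
    rw [combDensity, ← hΓ, hg, hd, hNΓ, hdfac]
    push_cast
    rw [div_eq_div_iff (by exact_mod_cast (Nat.choose_pos hk).ne') (by positivity)]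
    ring
  have hBbound : B / M ≤ (k.choose 2 : ℝ) / m := by
    rcases Nat.eq_zero_or_pos k with hk0 | hk1
    · subst hk0
      simp [hB, hM]
    · have hnat : m^k - m.descFactorial k ≤ k.choose 2 * m^(k-1) := by
        have h := Stmt11Aux.pow_sub_descFactorial m k
        exact Nat.sub_le_iff_le_add.mpr (h.trans_eq (Nat.add_comm _ _))
      have hcast : B ≤ (k.choose 2 : ℝ) * (m:ℝ)^(k-1) := by
        rw [hB]
        calc ((m^k - m.descFactorial k : ℕ) : ℝ) ≤ ((k.choose 2 * m^(k-1) : ℕ) : ℝ) := by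
              exact_mod_cast hnat
          _ = (k.choose 2 : ℝ) * (m:ℝ)^(k-1) := by push_cast; ring
      have hMeq : M = (m:ℝ)^(k-1) * m := by
        rw [hM, ← pow_succ]
        congr 1
        exact (Nat.succ_pred_eq_of_pos hk1).symm
      rw [div_le_div_iff₀ hMpos hmpos]
      calc B * m ≤ (k.choose 2 : ℝ) * (m:ℝ)^(k-1) * m := by
            apply mul_le_mul_of_nonneg_right hcast hmpos.le
        _ = (k.choose 2 : ℝ) * M := by rw [hMeq]; ring
  have h1 : g / d - g / M ≤ B / M := by
    rw [hBMd, div_sub_div _ _ hdpos.ne' hMpos.ne', div_le_div_iff₀ (by positivity) hMpos]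
    nlinarith [mul_nonneg (mul_nonneg (sub_nonneg.mpr hdM) (sub_nonneg.mpr hgd)) hMpos.le]
  have h2 : g / M ≤ g / d := by gcongr
  rw [hcomb, abs_sub_le_iff]
  constructor
  · linarith
  · linarith
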